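/- For s ≥ 5, if G is a bipartite graph with no independent set of size s (i.e., G is sP_1-free), then ivc(G) ≤ vc(G) + s − 3. -/
import Mathlib


open SimpleGraph

/-- `S` is an independent set of `G`. -/
def IsIS {V : Type*} (G : SimpleGraph V) (S : Set V) : Prop :=
  S.Pairwise fun u v => ¬ G.Adj u v

/-- `G` contains no induced subgraph isomorphic to `H`. -/
def HFree {W V : Type*} (H : SimpleGraph W) (G : SimpleGraph V) : Prop :=
  IsEmpty (H ↪g G)

/-- `G` is bipartite: the vertex set splits into two independent sets. -/
def IsBip {V : Type*} (G : SimpleGraph V) : Prop :=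
  ∃ X : Set V, IsIS G X ∧ IsIS G Xᶜ

/-- `S` is a vertex cover of `G`. -/
def IsVC {V : Type*} (G : SimpleGraph V) (S : Finset V) : Prop :=
  ∀ ⦃u v⦄, G.Adj u v → u ∈ S ∨ v ∈ S

/-- minimum size of a vertex cover. -/
noncomputable def vc {V : Type*} (G : SimpleGraph V) : ℕ :=
  sInf {n | ∃ S : Finset V, IsVC G S ∧ S.card = n}

/-- minimum size of an independent vertex cover. -/
noncomputable def ivc {V : Type*} (G : SimpleGraph V) : ℕ :=
  sInf {n | ∃ S : Finset V, IsVC G S ∧ IsIS G ↑S ∧ S.card = n}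

theorem stmt_7 {V : Type*} [Fintype V] (G : SimpleGraph V) (s : ℕ) (hs : 5 ≤ s)
    (hbip : IsBip G) (hfree : ∀ S : Finset V, IsIS G ↑S → S.card < s) :
    ivc G ≤ vc G + (s - 3) := by
  classical
  obtain ⟨X, hX, hXc⟩ := hbip
  -- the vc set is nonempty
  have hne : {n | ∃ S : Finset V, IsVC G S ∧ S.card = n}.Nonempty :=
    ⟨(Finset.univ : Finset V).card, Finset.univ, fun u v _ => Or.inl (Finset.mem_univ u), rfl⟩
  obtain ⟨C, hC, hCcard⟩ := Nat.sInf_mem hne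
  have hvceq : vc G = C.card := hCcard.symm
  by_cases hsmall : C.card ≤ 1
  · -- C is automatically independent
    have hsub : (↑C : Set V).Subsingleton := by
      intro a ha b hb
      exact Finset.card_le_one.mp hsmall a ha b hb
    have := Nat.sInf_le (show C.card ∈ {n | ∃ S : Finset V, IsVC G S ∧ IsIS G ↑S ∧ S.card = n}
      from ⟨C, hC, hsub.pairwise _, rfl⟩)
    have hivc : ivc G ≤ C.card := this
    omega
  · -- X is an independent vertex cover of size < s
    have hXvc : IsVC G X.toFinset := by
      intro u v huv
      by_contra h
      push_neg at h
      obtain ⟨hu, hv⟩ := h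
      rw [Set.mem_toFinset] at hu hv
      exact hXc hu hv huv.ne huv
    have hXis : IsIS G (↑X.toFinset : Set V) := by rwa [Set.coe_toFinset]
    have hlt : X.toFinset.card < s := hfree _ hXis
    have hivc : ivc G ≤ X.toFinset.card :=
      Nat.sInf_le ⟨X.toFinset, hXvc, hXis, rfl⟩

    omega
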